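/- arXiv:1910.13423 — 2 statements merged into one kernel-verified Lean document; each statement's English description precedes it below -/
import Mathlib

section
/- For integers g ≥ 1 and n ≥ 2, the abelianization of the surface braid group B_n(Σ_{g,1}) (given by the presentation below) is isomorphic to ℤ^{2g} × ℤ/2ℤ; under this isomorphism the images of a_1,…,a_g,b_1,…,b_g freely generate the ℤ^{2g} factor and the common image of the σ_i generates the ℤ/2ℤ factor. -/
/-- Generators of the surface braid group `B_n(Σ_{g,1})`: the braid generators
`σ_1, …, σ_{n-1}` (indexed by `Fin (n-1)`) and the surface generators
`a_1, …, a_g` and `b_1, …, b_g` (each indexed by `Fin g`). -/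
abbrev SBGen (n g : ℕ) : Type := Fin (n - 1) ⊕ (Fin g ⊕ Fin g)

/-- The braid generator `σ_{i+1}` as an element of the free group on the generators. -/
def sg (n g : ℕ) (i : Fin (n - 1)) : FreeGroup (SBGen n g) := FreeGroup.of (Sum.inl i)

/-- The surface generator `a_{i+1}` as an element of the free group on the generators. -/
def ag (n g : ℕ) (i : Fin g) : FreeGroup (SBGen n g) := FreeGroup.of (Sum.inr (Sum.inl i))

/-- The surface generator `b_{i+1}` as an element of the free group on the generators. -/
def bg (n g : ℕ) (i : Fin g) : FreeGroup (SBGen n g) := FreeGroup.of (Sum.inr (Sum.inr i))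

open scoped commutatorElement

/-- The relators of Bellingeri's presentation of the surface braid group `B_n(Σ_{g,1})`:
braid relations, commutation relations, and the mixed relations (R1), (R2).
Here `σ_{n-1}` is encoded as the index `l : Fin (n-1)` with `(l : ℕ) + 2 = n`. -/
def sbRels (n g : ℕ) : Set (FreeGroup (SBGen n g)) :=
  { r : FreeGroup (SBGen n g) |
    -- braid relations σᵢσᵢ₊₁σᵢ = σᵢ₊₁σᵢσᵢ₊₁
    (∃ i j : Fin (n - 1), (j : ℕ) = (i : ℕ) + 1 ∧
      r = sg n g i * sg n g j * sg n g i * (sg n g j * sg n g i * sg n g j)⁻¹) ∨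
    -- braid relations σᵢσⱼ = σⱼσᵢ for |i - j| ≥ 2
    (∃ i j : Fin (n - 1), ((i : ℕ) + 2 ≤ (j : ℕ) ∨ (j : ℕ) + 2 ≤ (i : ℕ)) ∧
      r = sg n g i * sg n g j * (sg n g j * sg n g i)⁻¹) ∨
    -- (R1) c σᵢ = σᵢ c for c ∈ A ∪ B and i ≤ n - 2 (1-based)
    (∃ (c : FreeGroup (SBGen n g)) (k : Fin g), (c = ag n g k ∨ c = bg n g k) ∧
      ∃ i : Fin (n - 1), (i : ℕ) + 2 < n ∧ r = c * sg n g i * (sg n g i * c)⁻¹) ∨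
    -- (R1) [c σ_{n-1} c, σ_{n-1}] = 1 for c ∈ A ∪ B
    (∃ (c : FreeGroup (SBGen n g)) (k : Fin g), (c = ag n g k ∨ c = bg n g k) ∧
      ∃ l : Fin (n - 1), (l : ℕ) + 2 = n ∧ r = ⁅c * sg n g l * c, sg n g l⁆) ∨
    -- (R2) aⱼ σ_{n-1} bⱼ = σ_{n-1} bⱼ σ_{n-1} aⱼ σ_{n-1}
    (∃ (j : Fin g) (l : Fin (n - 1)), (l : ℕ) + 2 = n ∧
      r = ag n g j * sg n g l * bg n g j *
        (sg n g l * bg n g j * sg n g l * ag n g j * sg n g l)⁻¹) ∨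
    -- (R2) commutator relations for k < l'
    (∃ (k l' : Fin g) (l : Fin (n - 1)), k < l' ∧ (l : ℕ) + 2 = n ∧
      (r = ⁅(sg n g l)⁻¹ * ag n g k * sg n g l, ag n g l'⁆ ∨
       r = ⁅(sg n g l)⁻¹ * bg n g k * sg n g l, bg n g l'⁆ ∨
       r = ⁅(sg n g l)⁻¹ * ag n g k * sg n g l, bg n g l'⁆ ∨
       r = ⁅(sg n g l)⁻¹ * bg n g k * sg n g l, ag n g l'⁆)) }

/-- The surface braid group `B_n(Σ_{g,1})`, presented by Bellingeri's presentation. -/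
abbrev SurfaceBraidGroup (n g : ℕ) : Type := PresentedGroup (sbRels n g)

namespace SBAux

variable (n g : ℕ)

abbrev T (g : ℕ) := Multiplicative ((Fin g → ℤ) × (Fin g → ℤ) × ZMod 2)

def fgen : SBGen n g → T g := fun x =>
  Multiplicative.ofAdd <| match x with
  | Sum.inl _ => (0, 0, 1)
  | Sum.inr (Sum.inl i) => (Pi.single i 1, 0, 0)
  | Sum.inr (Sum.inr i) => (0, Pi.single i 1, 0)

lemma lift_sg (i : Fin (n-1)) :
    FreeGroup.lift (fgen n g) (sg n g i) = Multiplicative.ofAdd (0, 0, 1) := by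
  simp [sg, fgen]

lemma lift_ag (i : Fin g) :
    FreeGroup.lift (fgen n g) (ag n g i) = Multiplicative.ofAdd (Pi.single i 1, 0, 0) := by
  simp [ag, fgen]

lemma lift_bg (i : Fin g) :
    FreeGroup.lift (fgen n g) (bg n g i) = Multiplicative.ofAdd (0, Pi.single i 1, 0) := by
  simp [bg, fgen]

lemma relOne : ∀ r ∈ sbRels n g, FreeGroup.lift (fgen n g) r = 1 := by
  intro r hr
  rcases hr with ⟨i,j,_,rfl⟩ | ⟨i,j,_,rfl⟩ | ⟨c,k,hc,i,_,rfl⟩ | ⟨c,k,hc,l,_,rfl⟩ |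
    ⟨j,l,_,rfl⟩ | ⟨k,l',l,_,_,h⟩
  · simp only [map_mul, map_inv, lift_sg]
    group
  · simp only [map_mul, map_inv, lift_sg]
    group
  · rcases hc with rfl | rfl <;>
      (simp only [map_mul, map_inv, lift_sg, lift_ag, lift_bg]
       rw [mul_inv_eq_one]; exact mul_comm _ _)
  · rw [map_commutatorElement]
    exact commutatorElement_eq_one_iff_commute.mpr (Commute.all _ _)
  · simp only [map_mul, map_inv, lift_sg, lift_ag, lift_bg]
    rw [mul_inv_eq_one]
    apply Multiplicative.toAdd.injective
    simp only [toAdd_mul, toAdd_ofAdd]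
    refine Prod.ext (by simp [add_comm]) (Prod.ext (by simp [add_comm]) ?_)
    simp only [Prod.snd_add]
    decide
  · rcases h with rfl | rfl | rfl | rfl <;>
      (rw [map_commutatorElement]
       exact commutatorElement_eq_one_iff_commute.mpr (Commute.all _ _))

end SBAux

namespace SBAux

variable {n g : ℕ}

def π (n g : ℕ) : FreeGroup (SBGen n g) →* Abelianization (SurfaceBraidGroup n g) :=
  (Abelianization.of (G := SurfaceBraidGroup n g)).comp
    (QuotientGroup.mk' (Subgroup.normalClosure (sbRels n g)))

lemma π_of (x : SBGen n g) :
    π n g (FreeGroup.of x) = Abelianization.of (PresentedGroup.of x) := rfl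

lemma π_rel {r : FreeGroup (SBGen n g)} (hr : r ∈ sbRels n g) : π n g r = 1 := by
  have : (QuotientGroup.mk' (Subgroup.normalClosure (sbRels n g))) r = 1 :=
    (QuotientGroup.eq_one_iff r).mpr (Subgroup.subset_normalClosure hr)
  show Abelianization.of ((QuotientGroup.mk' (Subgroup.normalClosure (sbRels n g))) r) = 1
  rw [this, map_one]

lemma sigma_step {i j : Fin (n-1)} (hj : (j : ℕ) = (i : ℕ) + 1) :
    π n g (sg n g i) = π n g (sg n g j) := by
  have h := π_rel (n := n) (g := g) (Or.inl ⟨i, j, hj, rfl⟩)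
  simp only [map_mul, map_inv, mul_inv_eq_one] at h
  set a := π n g (sg n g i)
  set b := π n g (sg n g j)
  have h2 : a * b * a = a * b * b := h.trans (by rw [mul_comm b a])
  exact mul_left_cancel h2

lemma sigma_all (hn : 2 ≤ n) (i j : Fin (n-1)) :
    π n g (sg n g i) = π n g (sg n g j) := by
  have key : ∀ k (hk : k < n - 1),
      π n g (sg n g ⟨k, hk⟩) = π n g (sg n g ⟨0, by omega⟩) := by
    intro k
    induction k with
    | zero => intro hk; rfl
    | succ m ih =>
      intro hk
      have hm : m < n - 1 := by omega
      rw [← sigma_step (i := ⟨m, hm⟩) (j := ⟨m+1, hk⟩) rfl]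
      exact ih hm
  calc π n g (sg n g i) = π n g (sg n g ⟨0, by omega⟩) := key i.1 i.2
    _ = π n g (sg n g j) := (key j.1 j.2).symm

private lemma comm_aux {G : Type*} [CommGroup G] (a b s : G) :
    s * b * s * a * s = a * s * b * (s * s) := by
  simp only [mul_comm, mul_left_comm, mul_assoc]

lemma sigma_sq (hg : 1 ≤ g) {l : Fin (n-1)} (hl : (l : ℕ) + 2 = n) :
    π n g (sg n g l) ^ 2 = 1 := by
  have h := π_rel (n := n) (g := g)
    (Or.inr (Or.inr (Or.inr (Or.inr (Or.inl ⟨⟨0, hg⟩, l, hl, rfl⟩)))))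
  simp only [map_mul, map_inv, mul_inv_eq_one] at h
  set A' := π n g (ag n g ⟨0, hg⟩)
  set B' := π n g (bg n g ⟨0, hg⟩)
  set S := π n g (sg n g l)
  rw [sq]
  exact left_eq_mul.mp (h.trans (comm_aux A' B' S))

end SBAux

namespace SBAux

variable {n g : ℕ}

noncomputable def Φ (n g : ℕ) : Abelianization (SurfaceBraidGroup n g) →* T g :=
  Abelianization.lift (PresentedGroup.toGroup (relOne n g))

lemma Φ_of (x : SBGen n g) :
    Φ n g (Abelianization.of (PresentedGroup.of x)) = fgen n g x := by
  simp [Φ, PresentedGroup.toGroup.of]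

def l0 (n : ℕ) (hn : 2 ≤ n) : Fin (n - 1) := ⟨n - 2, by omega⟩

lemma l0_val (hn : 2 ≤ n) : ((l0 n hn : Fin (n - 1)) : ℕ) + 2 = n := by
  simp only [l0]; omega

noncomputable def f3 (n g : ℕ) (hg : 1 ≤ g) (hn : 2 ≤ n) :
    ZMod 2 →+ Additive (Abelianization (SurfaceBraidGroup n g)) :=
  ZMod.lift 2 ⟨zmultiplesHom _ (Additive.ofMul (π n g (sg n g (l0 n hn)))), by
    have h := sigma_sq (n := n) hg (l0_val hn)
    simp only [zmultiplesHom_apply]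
    rw [show (((2:ℕ):ℤ)) = (2:ℤ) by norm_num, ← ofMul_zpow, ofMul_eq_zero]
    simpa using h⟩

noncomputable def Ψadd (hg : 1 ≤ g) (hn : 2 ≤ n) :
    ((Fin g → ℤ) × (Fin g → ℤ) × ZMod 2) →+
      Additive (Abelianization (SurfaceBraidGroup n g)) where
  toFun v := (∑ i, v.1 i • Additive.ofMul (π n g (ag n g i)))
    + (∑ i, v.2.1 i • Additive.ofMul (π n g (bg n g i)))
    + f3 n g hg hn v.2.2
  map_zero' := by simp
  map_add' v w := by
    simp only [Prod.fst_add, Prod.snd_add, Pi.add_apply, add_smul,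
      Finset.sum_add_distrib, map_add]
    abel

lemma Ψadd_apply (hg : 1 ≤ g) (hn : 2 ≤ n) (v) :
    Ψadd hg hn v = (∑ i, v.1 i • Additive.ofMul (π n g (ag n g i)))
    + (∑ i, v.2.1 i • Additive.ofMul (π n g (bg n g i)))
    + f3 n g hg hn v.2.2 := rfl

lemma sum_single {X : Type*} [CommGroup X] (i : Fin g) (F : Fin g → Additive X) :
    (∑ j, (Pi.single i 1 : Fin g → ℤ) j • F j) = F i := by
  have h : ∀ j, (Pi.single i 1 : Fin g → ℤ) j • F j = if j = i then F j else 0 := by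
    intro j
    rcases eq_or_ne j i with rfl | hj
    · simp
    · simp [Pi.single_eq_of_ne hj, hj]
  simp only [h]
  simp [Finset.sum_ite_eq']

lemma key1 (hg : 1 ≤ g) (hn : 2 ≤ n) (v : (Fin g → ℤ) × (Fin g → ℤ) × ZMod 2) :
    (MonoidHom.toAdditiveLeft (Φ n g)) (Ψadd hg hn v) = v := by
  obtain ⟨x, y, z⟩ := v
  have hA : ∀ i, (MonoidHom.toAdditiveLeft (Φ n g)) (Additive.ofMul (π n g (ag n g i)))
      = ((Pi.single i 1, 0, 0) : (Fin g → ℤ) × (Fin g → ℤ) × ZMod 2) := by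
    intro i
    simp [MonoidHom.toAdditiveLeft, ag, π_of, Φ_of, fgen]
  have hB : ∀ i, (MonoidHom.toAdditiveLeft (Φ n g)) (Additive.ofMul (π n g (bg n g i)))
      = ((0, Pi.single i 1, 0) : (Fin g → ℤ) × (Fin g → ℤ) × ZMod 2) := by
    intro i
    simp [MonoidHom.toAdditiveLeft, bg, π_of, Φ_of, fgen]
  have hS : (MonoidHom.toAdditiveLeft (Φ n g)) (Additive.ofMul (π n g (sg n g (l0 n hn))))
      = ((0, 0, 1) : (Fin g → ℤ) × (Fin g → ℤ) × ZMod 2) := by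
    simp [MonoidHom.toAdditiveLeft, sg, π_of, Φ_of, fgen]
  rw [Ψadd_apply, map_add, map_add, map_sum, map_sum]
  have hz : z = (((z.val : ℤ)) : ZMod 2) := by
    push_cast
    exact (ZMod.natCast_rightInverse z).symm
  have hf3 : f3 n g hg hn z = (z.val : ℤ) • Additive.ofMul (π n g (sg n g (l0 n hn))) := by
    conv_lhs => rw [hz]
    exact ZMod.lift_coe 2 _ _
  rw [hf3]
  simp only [map_zsmul, hA, hB, hS]
  refine Prod.ext ?_ (Prod.ext ?_ ?_)
  · simp only [Prod.fst_add, Prod.fst_sum, Prod.smul_mk, smul_zero,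
      Finset.sum_const_zero, add_zero, Prod.fst_zero]
    ext k
    simp [Finset.sum_apply, Pi.single_apply, mul_ite, Finset.sum_ite_eq]
  · simp only [Prod.snd_add, Prod.fst_add, Prod.snd_sum, Prod.fst_sum, Prod.smul_mk,
      smul_zero, Finset.sum_const_zero, add_zero, zero_add, Prod.snd_zero, Prod.fst_zero]
    ext k
    simp [Finset.sum_apply, Pi.single_apply, mul_ite, Finset.sum_ite_eq]
  · simp only [Prod.snd_sum, Prod.smul_mk, smul_zero, Finset.sum_const_zero, Prod.snd_add,
      Prod.snd_zero, zero_add, add_zero]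
    rw [zsmul_eq_mul, mul_one]
    push_cast
    exact ZMod.natCast_rightInverse z

lemma key2 (hg : 1 ≤ g) (hn : 2 ≤ n) :
    (AddMonoidHom.toMultiplicativeLeft (Ψadd hg hn)).comp (Φ n g) =
      MonoidHom.id (Abelianization (SurfaceBraidGroup n g)) := by
  apply Abelianization.hom_ext
  apply PresentedGroup.ext
  intro x
  show AddMonoidHom.toMultiplicativeLeft (Ψadd hg hn) (Φ n g (Abelianization.of (PresentedGroup.of x)))
    = Abelianization.of (PresentedGroup.of x)
  rw [Φ_of]
  rcases x with i | i | i
  · show (Ψadd hg hn ((0, 0, 1) : (Fin g → ℤ) × (Fin g → ℤ) × ZMod 2)).toMul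
      = Abelianization.of (PresentedGroup.of (Sum.inl i))
    rw [Ψadd_apply]
    have h1 : f3 n g hg hn 1 = Additive.ofMul (π n g (sg n g (l0 n hn))) := by
      rw [show (1 : ZMod 2) = ((1:ℤ) : ZMod 2) by decide]
      exact (ZMod.lift_coe 2 _ 1).trans (one_zsmul _)
    simp only [h1]
    simp only [Prod.fst_zero, Pi.zero_apply, zero_smul, Finset.sum_const_zero, zero_add]
    show π n g (sg n g (l0 n hn)) = Abelianization.of (PresentedGroup.of (Sum.inl i))
    rw [sigma_all hn (l0 n hn) i]
    rfl
  · show (Ψadd hg hn ((Pi.single i 1, 0, 0) : (Fin g → ℤ) × (Fin g → ℤ) × ZMod 2)).toMul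
      = Abelianization.of (PresentedGroup.of (Sum.inr (Sum.inl i)))
    rw [Ψadd_apply]
    simp only [sum_single, map_zero, Pi.zero_apply, zero_smul, Finset.sum_const_zero,
      add_zero]
    rfl
  · show (Ψadd hg hn ((0, Pi.single i 1, 0) : (Fin g → ℤ) × (Fin g → ℤ) × ZMod 2)).toMul
      = Abelianization.of (PresentedGroup.of (Sum.inr (Sum.inr i)))
    rw [Ψadd_apply]
    simp only [sum_single, map_zero, Pi.zero_apply, zero_smul, Finset.sum_const_zero,
      add_zero, zero_add]
    rfl

end SBAux

/-- For `g ≥ 1` and `n ≥ 2`, the abelianization of the surface braid group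
`B_n(Σ_{g,1})` is `ℤ^{2g} × ℤ/2ℤ`, with the classes of the `aᵢ`, `bᵢ` mapping to the
standard basis vectors of `ℤ^{2g} = ℤ^g × ℤ^g` (hence freely generating that factor),
and the common class of the `σᵢ` mapping to the generator of the `ℤ/2ℤ` factor. -/
theorem stmt_5 (g n : ℕ) (hg : 1 ≤ g) (hn : 2 ≤ n) :
    ∃ e : Abelianization (SurfaceBraidGroup n g) ≃*
        Multiplicative ((Fin g → ℤ) × (Fin g → ℤ) × ZMod 2),
      (∀ i : Fin g,
        e (Abelianization.of (PresentedGroup.of (rels := sbRels n g) (Sum.inr (Sum.inl i)))) =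
          Multiplicative.ofAdd (Pi.single i 1, 0, 0)) ∧
      (∀ i : Fin g,
        e (Abelianization.of (PresentedGroup.of (rels := sbRels n g) (Sum.inr (Sum.inr i)))) =
          Multiplicative.ofAdd (0, Pi.single i 1, 0)) ∧
      (∀ i : Fin (n - 1),
        e (Abelianization.of (PresentedGroup.of (rels := sbRels n g) (Sum.inl i))) =
          Multiplicative.ofAdd (0, 0, 1)) := by
  refine ⟨{ toFun := ⇑(SBAux.Φ n g),
            invFun := ⇑(AddMonoidHom.toMultiplicativeLeft (SBAux.Ψadd hg hn)),
            left_inv := fun a => DFunLike.congr_fun (SBAux.key2 hg hn) a,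
            right_inv := fun t => Multiplicative.toAdd.injective (SBAux.key1 hg hn t.toAdd),
            map_mul' := map_mul _ }, ?_, ?_, ?_⟩
  · intro i; exact SBAux.Φ_of _
  · intro i; exact SBAux.Φ_of _
  · intro i; exact SBAux.Φ_of _
end

section
/- Let m ≥ 1 and g ≥ 1 be natural numbers. The set of tuples ω = (ω_0,…,ω_{2m+2g−2}) ∈ ℕ^{2m+2g−1} satisfying Σ_i ω_i = m and (ω_{2i}, ω_{2i+1}) ≠ (0,0) for all i < m has exactly 2^m elements; explicitly, its elements are the tuples in which each pair (ω_{2i}, ω_{2i+1}) for i < m is either (1,0) or (0,1) and all remaining entries are 0. In particular its cardinality is independent of g. -/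
/-- `Qdel m k N` is the set `Q_m^{δ^k}` of tuples `ω ∈ ℕ^N` whose entries sum to `m`
and such that for each `i < k` the pair `(ω_{2i}, ω_{2i+1})` is not `(0,0)`.
(For `Q_m^{δ^k}(g)` take `N = 2k + 2g - 1`.) -/
def Qdel (m k N : ℕ) : Set (Fin N → ℕ) :=
  { ω | (∑ i, ω i) = m ∧
      ∀ i : ℕ, i < k → ∀ (h1 : 2 * i < N) (h2 : 2 * i + 1 < N),
        ¬(ω ⟨2 * i, h1⟩ = 0 ∧ ω ⟨2 * i + 1, h2⟩ = 0) }

lemma sum_pairs (f : ℕ → ℕ) (m : ℕ) :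
    ∑ j ∈ Finset.range (2 * m), f j
      = ∑ i ∈ Finset.range m, (f (2 * i) + f (2 * i + 1)) := by
  induction m with
  | zero => simp
  | succ n ih =>
    rw [show 2 * (n + 1) = 2 * n + 1 + 1 by ring, Finset.sum_range_succ,
      Finset.sum_range_succ, Finset.sum_range_succ, ih]
    ring

lemma sum_split (f : ℕ → ℕ) (m r : ℕ) :
    ∑ j ∈ Finset.range (2 * m + r), f j
      = (∑ i ∈ Finset.range m, (f (2 * i) + f (2 * i + 1)))
        + ∑ j ∈ Finset.range r, f (2 * m + j) := by
  induction r with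
  | zero => simpa using sum_pairs f m
  | succ n ih =>
    rw [show 2 * m + (n + 1) = (2 * m + n) + 1 from rfl, Finset.sum_range_succ, ih,
      Finset.sum_range_succ]
    ring

/-- For `m ≥ 1` and `g ≥ 1` (written `g = g' + 1`, so that `Q_m^{δ^m}(g)` consists of
tuples of length `2m + 2g - 1 = 2m + (2g' + 1)`): the set `Q_m^{δ^m}(g)` consists
exactly of the tuples in which, for each `i < m`, the pair `(ω_{2i}, ω_{2i+1})` is
either `(1,0)` or `(0,1)` (parametrized by `ε : Fin m → Bool`) and all remaining
entries are `0`; hence it has exactly `2^m` elements — in particular its cardinality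
is independent of `g`. -/
theorem stmt_14 (m g : ℕ) (hm : 1 ≤ m) (hg : 1 ≤ g) (g' : ℕ) (hg' : g = g' + 1) :
    Qdel m m (2 * m + (2 * g' + 1))
      = Set.range (fun ε : Fin m → Bool =>
          fun j : Fin (2 * m + (2 * g' + 1)) =>
            if h : (j : ℕ) < 2 * m then
              (if ε ⟨(j : ℕ) / 2, by omega⟩ = decide ((j : ℕ) % 2 = 1) then 1 else 0)
            else 0) ∧
    Nat.card ↥(Qdel m m (2 * m + (2 * g' + 1))) = 2 ^ m := by
  set N := 2 * m + (2 * g' + 1) with hN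
  set T : (Fin m → Bool) → (Fin N → ℕ) := fun ε =>
          fun j : Fin N =>
            if h : (j : ℕ) < 2 * m then
              (if ε ⟨(j : ℕ) / 2, by omega⟩ = decide ((j : ℕ) % 2 = 1) then 1 else 0)
            else 0 with hT
  -- values of T
  have Tval : ∀ (ε : Fin m → Bool) (j : Fin N),
      T ε j = if h : (j : ℕ) < 2 * m then
          (if ε ⟨(j : ℕ) / 2, by omega⟩ = decide ((j : ℕ) % 2 = 1) then 1 else 0)
        else 0 := fun _ _ => rfl
  have Tval0 : ∀ (ε : Fin m → Bool) (i : ℕ) (him : i < m) (h1 : 2 * i < N),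
      T ε ⟨2 * i, h1⟩ = if ε ⟨i, him⟩ = false then 1 else 0 := by
    intro ε i him h1
    rw [Tval, dif_pos (show ((⟨2 * i, h1⟩ : Fin N) : ℕ) < 2 * m by simpa using by omega)]
    have e1 : (⟨((⟨2 * i, h1⟩ : Fin N) : ℕ) / 2, show (2 * i) / 2 < m by omega⟩ : Fin m) = ⟨i, him⟩ :=
      Fin.ext (show (2 * i) / 2 = i by omega)
    rw [e1]
    simp [Nat.mul_mod_right]
  have Tval1 : ∀ (ε : Fin m → Bool) (i : ℕ) (him : i < m) (h2 : 2 * i + 1 < N),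
      T ε ⟨2 * i + 1, h2⟩ = if ε ⟨i, him⟩ = true then 1 else 0 := by
    intro ε i him h2
    rw [Tval, dif_pos (show ((⟨2 * i + 1, h2⟩ : Fin N) : ℕ) < 2 * m by simpa using by omega)]
    have e1 : (⟨((⟨2 * i + 1, h2⟩ : Fin N) : ℕ) / 2, show (2 * i + 1) / 2 < m by omega⟩ : Fin m) = ⟨i, him⟩ :=
      Fin.ext (show (2 * i + 1) / 2 = i by omega)
    rw [e1]
    simp [Nat.mul_add_mod]
  have Ttail : ∀ (ε : Fin m → Bool) (j : Fin N), ¬ ((j : ℕ) < 2 * m) → T ε j = 0 := by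
    intro ε j hj
    rw [Tval, dif_neg hj]
  have key : Qdel m m N = Set.range T := by
    ext ω
    constructor
    · rintro ⟨hsum, hpair⟩
      set F : ℕ → ℕ := fun j => if h : j < N then ω ⟨j, h⟩ else 0 with hF
      have hsum' : (∑ i ∈ Finset.range m, (F (2 * i) + F (2 * i + 1)))
          + ∑ j ∈ Finset.range (2 * g' + 1), F (2 * m + j) = m := by
        rw [← sum_split, ← hN, ← Fin.sum_univ_eq_sum_range, ← hsum]
        exact Finset.sum_congr rfl fun i _ => by simp [hF, i.isLt]
      have hFω : ∀ (j : ℕ) (hj : j < N), F j = ω ⟨j, hj⟩ := fun j hj => by simp [hF, hj]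
      have hge : ∀ i ∈ Finset.range m, 1 ≤ F (2 * i) + F (2 * i + 1) := by
        intro i hi
        rw [Finset.mem_range] at hi
        have h1 : 2 * i < N := by omega
        have h2 : 2 * i + 1 < N := by omega
        have := hpair i hi h1 h2
        rw [hFω _ h1, hFω _ h2]
        omega
      have hle : m ≤ ∑ i ∈ Finset.range m, (F (2 * i) + F (2 * i + 1)) := by
        calc m = ∑ i ∈ Finset.range m, 1 := by simp
        _ ≤ _ := Finset.sum_le_sum hge
      have htail : ∀ j ∈ Finset.range (2 * g' + 1), F (2 * m + j) = 0 := by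
        rw [← Finset.sum_eq_zero_iff]
        omega
      have hpsum : ∑ i ∈ Finset.range m, (F (2 * i) + F (2 * i + 1)) = m := by omega
      have hone : ∀ i ∈ Finset.range m, F (2 * i) + F (2 * i + 1) = 1 := by
        have h0 : ∑ i ∈ Finset.range m, (F (2 * i) + F (2 * i + 1) - 1) = 0 := by
          have hsp : ∑ i ∈ Finset.range m, (F (2 * i) + F (2 * i + 1))
              = (∑ i ∈ Finset.range m, (F (2 * i) + F (2 * i + 1) - 1))
                + ∑ _i ∈ Finset.range m, (1 : ℕ) := by
            rw [← Finset.sum_add_distrib]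
            exact Finset.sum_congr rfl fun i hi => by have := hge i hi; omega
          have hs1 : ∑ _i ∈ Finset.range m, (1 : ℕ) = m := by simp
          omega
        rw [Finset.sum_eq_zero_iff] at h0
        intro i hi
        have := h0 i hi
        have := hge i hi
        omega
      refine ⟨fun i => decide (F (2 * (i : ℕ) + 1) = 1), funext fun j => ?_⟩
      by_cases hj : (j : ℕ) < 2 * m
      · set i : ℕ := (j : ℕ) / 2 with hi
        have him : i < m := by omega
        have h1 : 2 * i < N := by omega
        have h2 : 2 * i + 1 < N := by omega
        have hp := hone i (Finset.mem_range.mpr him)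
        rcases (by omega : (j : ℕ) = 2 * i ∨ (j : ℕ) = 2 * i + 1) with hc | hc
        · have ej : j = ⟨2 * i, h1⟩ := Fin.ext hc
          rw [ej]
          refine (Tval0 (fun i => decide (F (2 * (i : ℕ) + 1) = 1)) i him h1).trans ?_
          rw [← hFω _ h1]
          by_cases hb : F (2 * i + 1) = 1 <;> simp [hb] <;> omega
        · have ej : j = ⟨2 * i + 1, h2⟩ := Fin.ext hc
          rw [ej]
          refine (Tval1 (fun i => decide (F (2 * (i : ℕ) + 1) = 1)) i him h2).trans ?_
          rw [← hFω _ h2]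
          by_cases hb : F (2 * i + 1) = 1 <;> simp [hb] <;> omega
      · refine (Ttail (fun i => decide (F (2 * (i : ℕ) + 1) = 1)) j hj).trans ?_
        have hj2 : (j : ℕ) = 2 * m + ((j : ℕ) - 2 * m) := by omega
        have := htail ((j : ℕ) - 2 * m) (Finset.mem_range.mpr (by omega))
        rw [← hj2] at this
        rw [hFω _ j.isLt] at this
        simpa using this.symm
    · rintro ⟨ε, rfl⟩
      constructor
      · set F : ℕ → ℕ := fun j => if h : j < N then T ε ⟨j, h⟩ else 0 with hF
        have : ∑ j, T ε j = ∑ j ∈ Finset.range N, F j := by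
          rw [← Fin.sum_univ_eq_sum_range]
          exact Finset.sum_congr rfl fun i _ => by simp [hF, i.isLt]
        rw [this, hN, sum_split]
        have hpair1 : ∀ i ∈ Finset.range m, F (2 * i) + F (2 * i + 1) = 1 := by
          intro i hi
          rw [Finset.mem_range] at hi
          have h1 : 2 * i < N := by omega
          have h2 : 2 * i + 1 < N := by omega
          have e0 : F (2 * i) = if ε ⟨i, hi⟩ = false then 1 else 0 := by
            simp only [hF, dif_pos h1]; exact Tval0 ε i hi h1
          have e1 : F (2 * i + 1) = if ε ⟨i, hi⟩ = true then 1 else 0 := by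
            simp only [hF, dif_pos h2]; exact Tval1 ε i hi h2
          rw [e0, e1]
          cases hb : ε ⟨i, hi⟩ <;> simp
        have htail : ∀ j ∈ Finset.range (2 * g' + 1), F (2 * m + j) = 0 := by
          intro j hj
          rw [Finset.mem_range] at hj
          have h1 : 2 * m + j < N := by omega
          simp only [hF, dif_pos h1]
          exact Ttail ε ⟨2 * m + j, h1⟩ (show ¬ (2 * m + j < 2 * m) by omega)
        rw [Finset.sum_congr rfl hpair1, Finset.sum_congr rfl htail]
        simp
      · intro i hi h1 h2
        rw [Tval0 ε i hi h1, Tval1 ε i hi h2]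
        cases hb : ε ⟨i, hi⟩ <;> simp [hb]
  have hinj : Function.Injective T := by
    intro ε ε' h
    funext i
    have h1 : 2 * (i : ℕ) + 1 < N := by omega
    have := congrFun h ⟨2 * (i : ℕ) + 1, h1⟩
    rw [Tval1 ε (i : ℕ) i.isLt h1, Tval1 ε' (i : ℕ) i.isLt h1] at this
    have ei : (⟨(i : ℕ), i.isLt⟩ : Fin m) = i := Fin.ext rfl
    rw [ei] at this
    cases hb : ε i <;> cases hb' : ε' i <;> simp [hb, hb'] at this ⊢
  refine ⟨key, ?_⟩
  rw [key, Nat.card_range_of_injective hinj]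
  simp [Nat.card_eq_fintype_card]
end
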